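/- Under the standing assumption that $\varsigma$ has no point masses in common with $\varrho$ or $\chi$ (i.e., $\varsigma(\{x\})\varrho(\{x\}) = \varsigma(\{x\})\chi(\{x\}) = 0$ for all $x$), the Lagrange identity holds: for all $f, g \in \mathfrak{D}_\tau$ and $\alpha < \beta$ in $(a,b)$, $\int_{[\alpha,\beta)} (g\, \tau f - f\, \tau g)\, d\varrho = W(f,g)(\beta) - W(f,g)(\alpha)$, where $W(f,g)(x) = f(x) g^{[1]}(x) - f^{[1]}(x) g(x)$. -/

import Mathlib

open MeasureTheory Set Filter

/-- The two-sided Lebesgue–Stieltjes integral `∫_c^x h dω`. -/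
noncomputable def mInt (ω : Measure ℝ) (h : ℝ → ℂ) (c x : ℝ) : ℂ :=
  if c ≤ x then ∫ t in Set.Ico c x, h t ∂ω else -∫ t in Set.Ico x c, h t ∂ω

/-- Local integrability on compact subintervals of `(a,b)` with respect to `ω`. -/
def LocInt (a b : ℝ) (ω : Measure ℝ) (h : ℝ → ℂ) : Prop :=
  ∀ α ∈ Set.Ioo a b, ∀ β ∈ Set.Ioo a b, MeasureTheory.IntegrableOn h (Set.Ico α β) ω

/-- `(f, f1, fτ)` consists of a function `f` in the maximal domain `𝔇_τ` of
`τ f = d/dϱ (-df/dς + ∫ f dχ)`, its quasi-derivative `f1 = df/dς` and `fτ = τ f`.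
The locally finite complex Borel measures `ς`, `χ`, `ϱ` on `(a,b)` are represented
by their densities `σf`, `χf`, `ρf` with respect to the positive Borel measure `ω`. -/
def InDom (a b : ℝ) (ω : Measure ℝ) (σf χf ρf : ℝ → ℂ) (f f1 fτ : ℝ → ℂ) : Prop :=
  LocInt a b ω (fun t => f1 t * σf t) ∧
  LocInt a b ω (fun t => f t * χf t - fτ t * ρf t) ∧
  ∀ α ∈ Set.Ioo a b, ∀ β ∈ Set.Ioo a b, α ≤ β →
    f β = f α + ∫ t in Set.Ico α β, f1 t * σf t ∂ω ∧
    f1 β = f1 α + ∫ t in Set.Ico α β, (f t * χf t - fτ t * ρf t) ∂ω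

/-- `supp ς = (a,b)`: every nondegenerate compact subinterval carries `ς`-mass. -/
def SuppFull (a b : ℝ) (ω : Measure ℝ) (σf : ℝ → ℂ) : Prop :=
  ∀ α ∈ Set.Ioo a b, ∀ β ∈ Set.Ioo a b, α < β → ∫ t in Set.Ico α β, ‖σf t‖ ∂ω ≠ 0

/-- `ς` has no point masses in common with `ϱ` or `χ`:
`ς{x}·ϱ{x} = ς{x}·χ{x} = 0` for all `x ∈ (a,b)`. -/
def NoCommonAtoms (a b : ℝ) (ω : Measure ℝ) (σf χf ρf : ℝ → ℂ) : Prop :=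
  ∀ x ∈ Set.Ioo a b,
    ((ω {x}).toReal : ℂ) * σf x * (((ω {x}).toReal : ℂ) * ρf x) = 0 ∧
    ((ω {x}).toReal : ℂ) * σf x * (((ω {x}).toReal : ℂ) * χf x) = 0

/-- The measures `ς`, `χ` are real and `ϱ` is positive. -/
def RealCoeffs (σf χf ρf : ℝ → ℂ) : Prop :=
  (∀ t, (σf t).im = 0) ∧ (∀ t, (χf t).im = 0) ∧ (∀ t, (ρf t).im = 0 ∧ 0 ≤ (ρf t).re)

/-- `x` belongs to the support of the measure `ϱ` (with density `ρf` w.r.t. `ω`). -/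
def InSuppRho (a b : ℝ) (ω : Measure ℝ) (ρf : ℝ → ℂ) (x : ℝ) : Prop :=
  ∀ ε > 0, ¬ (∀ᵐ t ∂ω, (t ∈ Set.Ioo (x - ε) (x + ε) ∧ t ∈ Set.Ioo a b) → ρf t = 0)

/-- The gap condition: for each gap `(α,β)` of `supp ϱ` and every `f ∈ 𝔇_τ` with outer
limits `f(α-) = f(β+) = 0` one has `f ≡ 0` on `(α,β)`. -/
def GapCondition (a b : ℝ) (ω : Measure ℝ) (σf χf ρf : ℝ → ℂ) : Prop :=
  ∀ α ∈ Set.Ioo a b, ∀ β ∈ Set.Ioo a b, α < β →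
    (∀ᵐ t ∂ω, t ∈ Set.Ioo α β → ρf t = 0) →
    InSuppRho a b ω ρf α → InSuppRho a b ω ρf β →
    ∀ f f1 fτ : ℝ → ℂ, InDom a b ω σf χf ρf f f1 fτ →
      Filter.Tendsto f (nhdsWithin α (Set.Iio α)) (nhds 0) →
      Filter.Tendsto f (nhdsWithin β (Set.Ioi β)) (nhds 0) →
      ∀ x ∈ Set.Ioo α β, f x = 0

/-- `supp ϱ` contains at least two points. -/
def SuppRhoTwoPoints (a b : ℝ) (ω : Measure ℝ) (ρf : ℝ → ℂ) : Prop :=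
  ∃ x ∈ Set.Ioo a b, ∃ y ∈ Set.Ioo a b, x ≠ y ∧
    InSuppRho a b ω ρf x ∧ InSuppRho a b ω ρf y

/-- Fubini on the square, split along the diagonal. -/
private lemma lagrange_core (ν : Measure ℝ) [SigmaFinite ν] (u v : ℝ → ℂ)
    (hu : Integrable u ν) (hv : Integrable v ν)
    (hdiag : ∀ t, u t * v t * ((ν {t}).toReal : ℂ) = 0) :
    Integrable (fun s => v s * ∫ t in Set.Iio s, u t ∂ν) ν ∧
    Integrable (fun t => u t * ∫ s in Set.Iio t, v s ∂ν) ν ∧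
    (∫ t, u t ∂ν) * (∫ s, v s ∂ν) =
      (∫ s, (v s * ∫ t in Set.Iio s, u t ∂ν) ∂ν) +
      (∫ t, (u t * ∫ s in Set.Iio t, v s ∂ν) ∂ν) := by
  have hD : MeasurableSet {p : ℝ × ℝ | p.1 < p.2} :=
    measurableSet_lt measurable_fst measurable_snd
  have hh : Integrable (fun p : ℝ × ℝ => u p.1 * v p.2) (ν.prod ν) := hu.mul_prod hv
  have hh1 : Integrable ({p : ℝ × ℝ | p.1 < p.2}.indicator fun p => u p.1 * v p.2) (ν.prod ν) :=
    hh.indicator hD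
  have hh2 : Integrable ({p : ℝ × ℝ | p.1 < p.2}ᶜ.indicator fun p => u p.1 * v p.2) (ν.prod ν) :=
    hh.indicator hD.compl
  have e1 : ∀ s : ℝ,
      (∫ t, ({p : ℝ × ℝ | p.1 < p.2}.indicator (fun p => u p.1 * v p.2)) (t, s) ∂ν)
        = v s * ∫ t in Set.Iio s, u t ∂ν := by
    intro s
    have h1 : (fun t => ({p : ℝ × ℝ | p.1 < p.2}.indicator (fun p => u p.1 * v p.2)) (t, s))
        = (Set.Iio s).indicator (fun t => u t * v s) := by
      funext t
      by_cases ht : t < s <;>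
        simp [Set.indicator_apply, Set.mem_setOf_eq, Set.mem_Iio, ht]
    rw [h1, integral_indicator measurableSet_Iio, integral_mul_const, mul_comm]
  have e2 : ∀ t : ℝ,
      (∫ s, ({p : ℝ × ℝ | p.1 < p.2}ᶜ.indicator (fun p => u p.1 * v p.2)) (t, s) ∂ν)
        = u t * ∫ s in Set.Iio t, v s ∂ν := by
    intro t
    have h1 : (fun s => ({p : ℝ × ℝ | p.1 < p.2}ᶜ.indicator (fun p => u p.1 * v p.2)) (t, s))
        = (Set.Iic t).indicator (fun s => u t * v s) := by
      funext s
      by_cases hs : t < s <;>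
        simp [Set.indicator_apply, Set.mem_compl_iff, Set.mem_setOf_eq, Set.mem_Iic, hs,
          not_lt.mp, le_of_not_gt, not_le.mpr]
    have hv' : Integrable (fun s => u t * v s) ν := hv.const_mul (u t)
    rw [h1, integral_indicator measurableSet_Iic, ← Set.Iio_union_right,
      setIntegral_union (by simp) (measurableSet_singleton t) hv'.restrict hv'.restrict,
      integral_singleton, integral_const_mul, Complex.real_smul]
    have h0 := hdiag t
    rw [measureReal_def]
    ring_nf
    ring_nf at h0
    linear_combination h0
  have int1 : Integrable (fun s => v s * ∫ t in Set.Iio s, u t ∂ν) ν :=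
    (hh1.integral_prod_right).congr (Filter.Eventually.of_forall e1)
  have int2 : Integrable (fun t => u t * ∫ s in Set.Iio t, v s ∂ν) ν :=
    (hh2.integral_prod_left).congr (Filter.Eventually.of_forall e2)
  refine ⟨int1, int2, ?_⟩
  have hsplit : ∫ p : ℝ × ℝ, u p.1 * v p.2 ∂(ν.prod ν)
      = (∫ p, ({p : ℝ × ℝ | p.1 < p.2}.indicator fun p => u p.1 * v p.2) p ∂(ν.prod ν))
        + (∫ p, ({p : ℝ × ℝ | p.1 < p.2}ᶜ.indicator fun p => u p.1 * v p.2) p ∂(ν.prod ν)) := by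
    rw [← integral_add hh1 hh2]
    refine integral_congr_ae (Filter.Eventually.of_forall fun p => ?_)
    simp only [Pi.add_apply]
    by_cases hp : p ∈ {p : ℝ × ℝ | p.1 < p.2} <;>
      simp [Set.indicator_apply, hp]
  calc (∫ t, u t ∂ν) * (∫ s, v s ∂ν)
      = ∫ p : ℝ × ℝ, u p.1 * v p.2 ∂(ν.prod ν) := (integral_prod_mul u v).symm
    _ = (∫ p, ({p : ℝ × ℝ | p.1 < p.2}.indicator fun p => u p.1 * v p.2) p ∂(ν.prod ν))
        + (∫ p, ({p : ℝ × ℝ | p.1 < p.2}ᶜ.indicator fun p => u p.1 * v p.2) p ∂(ν.prod ν)) :=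
      hsplit
    _ = (∫ s, (v s * ∫ t in Set.Iio s, u t ∂ν) ∂ν) +
        (∫ t, (u t * ∫ s in Set.Iio t, v s ∂ν) ∂ν) := by
      rw [integral_prod_symm _ hh1, integral_prod _ hh2]
      congr 1
      · exact integral_congr_ae (Filter.Eventually.of_forall e1)
      · exact integral_congr_ae (Filter.Eventually.of_forall e2)

/-- Integrals of a function vanishing a.e. off a set `S` only depend on the
restriction to `S`. -/
private lemma zero_off (μ : Measure ℝ) {S : Set ℝ} (hS : MeasurableSet S) {w : ℝ → ℂ}
    (hw0 : w =ᵐ[μ.restrict Sᶜ] 0) (hwS : Integrable w (μ.restrict S)) :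
    Integrable w μ ∧ ∫ x, w x ∂μ = ∫ x, w x ∂(μ.restrict S) := by
  have h2 : Integrable w (μ.restrict Sᶜ) := by
    rw [integrable_congr hw0]; exact integrable_zero _ _ _
  have hdec : μ.restrict S + μ.restrict Sᶜ = μ := Measure.restrict_add_restrict_compl hS
  constructor
  · rw [← hdec]; exact hwS.add_measure h2
  · conv_lhs => rw [← hdec]
    rw [integral_add_measure hwS h2, integral_congr_ae hw0]
    simp

/-- The main product rule: if `F` and `G` are the "primitives" of `u dω` and `v dω`
on `[α,β]` and the diagonal terms vanish, then
`F β * G β - F α * G α = ∫_{[α,β)} (v F + u G) dω`. -/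
private lemma lagrange_key (α β : ℝ) (hαβ : α ≤ β) (ω : Measure ℝ) (u v F G : ℝ → ℂ)
    (hu : IntegrableOn u (Set.Ico α β) ω) (hv : IntegrableOn v (Set.Ico α β) ω)
    (hF : ∀ s ∈ Set.Icc α β, F s = F α + ∫ t in Set.Ico α s, u t ∂ω)
    (hG : ∀ s ∈ Set.Icc α β, G s = G α + ∫ t in Set.Ico α s, v t ∂ω)
    (hdiag : ∀ t ∈ Set.Ico α β, u t * v t * ((ω {t}).toReal : ℂ) = 0) :
    IntegrableOn (fun s => v s * F s + u s * G s) (Set.Ico α β) ω ∧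
    F β * G β - F α * G α = ∫ s in Set.Ico α β, (v s * F s + u s * G s) ∂ω := by
  have hIm : MeasurableSet (Set.Ico α β) := measurableSet_Ico
  have huμ : Integrable u (ω.restrict (Set.Ico α β)) := hu
  have hvμ : Integrable v (ω.restrict (Set.Ico α β)) := hv
  have hnorm : Integrable (fun t => ‖u t‖ + ‖v t‖) (ω.restrict (Set.Ico α β)) :=
    huμ.norm.add hvμ.norm
  obtain ⟨S, hSm, hS0, hSσ⟩ := hnorm.aefinStronglyMeasurable.exists_set_sigmaFinite
  set μ := ω.restrict (Set.Ico α β) with hμdef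
  set ν := μ.restrict S with hνdef
  haveI : SigmaFinite ν := hSσ
  have hu0 : u =ᵐ[μ.restrict Sᶜ] 0 := by
    filter_upwards [hS0] with t ht
    have h1 : ‖u t‖ + ‖v t‖ = 0 := ht
    have h2 := norm_nonneg (u t)
    have h3 := norm_nonneg (v t)
    have : ‖u t‖ = 0 := by linarith
    simpa using norm_eq_zero.mp this
  have hv0 : v =ᵐ[μ.restrict Sᶜ] 0 := by
    filter_upwards [hS0] with t ht
    have h1 : ‖u t‖ + ‖v t‖ = 0 := ht
    have h2 := norm_nonneg (u t)
    have h3 := norm_nonneg (v t)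
    have : ‖v t‖ = 0 := by linarith
    simpa using norm_eq_zero.mp this
  have huν : Integrable u ν := huμ.restrict
  have hvν : Integrable v ν := hvμ.restrict
  -- the diagonal hypothesis transfers to ν
  have hdiagν : ∀ t, u t * v t * ((ν {t}).toReal : ℂ) = 0 := by
    intro t
    have hνt : ν {t} = ω ({t} ∩ S ∩ Set.Ico α β) := by
      rw [hνdef, hμdef, Measure.restrict_apply (measurableSet_singleton t),
        Measure.restrict_apply ((measurableSet_singleton t).inter hSm)]
    by_cases hts : t ∈ S ∧ t ∈ Set.Ico α β
    · have h1 : {t} ∩ S ∩ Set.Ico α β = {t} := by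
        rw [Set.inter_eq_left.mpr (Set.singleton_subset_iff.mpr hts.1),
          Set.inter_eq_left.mpr (Set.singleton_subset_iff.mpr hts.2)]
      rw [hνt, h1]
      exact hdiag t hts.2
    · have h1 : {t} ∩ S ∩ Set.Ico α β = ∅ := by
        ext x
        simp only [Set.mem_inter_iff, Set.mem_singleton_iff, Set.mem_empty_iff_false,
          iff_false, not_and]
        rintro ⟨rfl, hS'⟩ hI'
        exact hts ⟨hS', hI'⟩
      rw [hνt, h1]
      simp
  obtain ⟨int1, int2, hmain⟩ := lagrange_core ν u v huν hvν hdiagν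
  -- identify the inner integrals with F and G
  have hres : ∀ s ∈ Set.Icc α β, μ.restrict (Set.Iio s) = ω.restrict (Set.Ico α s) := by
    intro s hs
    rw [hμdef, Measure.restrict_restrict measurableSet_Iio]
    congr 1
    ext x
    simp only [Set.mem_inter_iff, Set.mem_Iio, Set.mem_Ico]
    exact ⟨fun h => ⟨h.2.1, h.1⟩, fun h => ⟨h.2, h.1, lt_of_lt_of_le h.2 hs.2⟩⟩
  have hinner : ∀ (w : ℝ → ℂ), Integrable w ν → w =ᵐ[μ.restrict Sᶜ] 0 →
      ∀ s ∈ Set.Icc α β, (∫ t in Set.Iio s, w t ∂ν) = ∫ t in Set.Ico α s, w t ∂ω := by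
    intro w hwνint hw0 s hs
    have hrr : (μ.restrict (Set.Iio s)).restrict S = ν.restrict (Set.Iio s) := by
      rw [hνdef, Measure.restrict_restrict hSm, Measure.restrict_restrict measurableSet_Iio,
        Set.inter_comm]
    have hle : (μ.restrict (Set.Iio s)).restrict Sᶜ ≤ μ.restrict Sᶜ := by
      rw [Measure.restrict_restrict hSm.compl]
      exact Measure.restrict_mono Set.inter_subset_left le_rfl
    have hw0' : w =ᵐ[(μ.restrict (Set.Iio s)).restrict Sᶜ] 0 :=
      hw0.filter_mono (ae_mono hle)
    have hwint' : Integrable w ((μ.restrict (Set.Iio s)).restrict S) := by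
      rw [hrr]; exact hwνint.restrict
    obtain ⟨-, h2⟩ := zero_off (μ.restrict (Set.Iio s)) hSm hw0' hwint'
    rw [hrr] at h2
    rw [← h2, hres s hs]
  have hFs : ∀ s ∈ Set.Icc α β, (∫ t in Set.Iio s, u t ∂ν) = F s - F α := by
    intro s hs
    rw [hinner u huν hu0 s hs, hF s hs]; ring
  have hGs : ∀ s ∈ Set.Icc α β, (∫ t in Set.Iio s, v t ∂ν) = G s - G α := by
    intro s hs
    rw [hinner v hvν hv0 s hs, hG s hs]; ring
  have hmemν : ∀ᵐ s ∂ν, s ∈ Set.Ico α β :=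
    (ae_restrict_mem hIm).filter_mono (ae_mono Measure.restrict_le_self)
  have ecg1 : (fun s => v s * ∫ t in Set.Iio s, u t ∂ν) =ᵐ[ν] fun s => v s * (F s - F α) := by
    filter_upwards [hmemν] with s hs
    rw [hFs s ⟨hs.1, hs.2.le⟩]
  have ecg2 : (fun t => u t * ∫ s in Set.Iio t, v s ∂ν) =ᵐ[ν] fun t => u t * (G t - G α) := by
    filter_upwards [hmemν] with t ht
    rw [hGs t ⟨ht.1, ht.2.le⟩]
  have int1' : Integrable (fun s => v s * (F s - F α)) ν := int1.congr ecg1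
  have int2' : Integrable (fun t => u t * (G t - G α)) ν := int2.congr ecg2
  -- total integrals of u and v
  have hmemIio : ∀ᵐ x ∂ν, x ∈ Set.Iio β := by
    filter_upwards [hmemν] with x hx; exact hx.2
  have hν_Iio : ν.restrict (Set.Iio β) = ν := Measure.restrict_eq_self_of_ae_mem hmemIio
  have hAu : ∫ t, u t ∂ν = F β - F α := by
    have h := hFs β ⟨hαβ, le_rfl⟩
    rwa [hν_Iio] at h
  have hAv : ∫ t, v t ∂ν = G β - G α := by
    have h := hGs β ⟨hαβ, le_rfl⟩
    rwa [hν_Iio] at h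
  -- the combined integrand
  have hwS : Integrable (fun s => v s * F s + u s * G s) ν := by
    have h : Integrable (fun s => (v s * (F s - F α) + u s * (G s - G α))
        + (F α * v s + G α * u s)) ν :=
      (int1'.add int2').add ((hvν.const_mul (F α)).add (huν.const_mul (G α)))
    exact h.congr (Filter.Eventually.of_forall fun s => by ring)
  have hw0 : (fun s => v s * F s + u s * G s) =ᵐ[μ.restrict Sᶜ] 0 := by
    filter_upwards [hu0, hv0] with s h1 h2
    simp [h1, h2]
  obtain ⟨hwint, hwq⟩ := zero_off μ hSm hw0 hwS
  refine ⟨hwint, ?_⟩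
  have hsum : ∫ s, (v s * F s + u s * G s) ∂ν
      = (∫ s, (v s * (F s - F α)) ∂ν) + (∫ s, (u s * (G s - G α)) ∂ν)
        + (F α * ∫ s, v s ∂ν + G α * ∫ s, u s ∂ν) := by
    have e : (fun s => v s * F s + u s * G s) =ᵐ[ν]
        (fun s => (v s * (F s - F α) + u s * (G s - G α)) + (F α * v s + G α * u s)) :=
      Filter.Eventually.of_forall fun s => by ring
    have i12 : Integrable (fun s => v s * (F s - F α) + u s * (G s - G α)) ν :=
      int1'.add int2'
    have i34 : Integrable (fun s => F α * v s + G α * u s) ν :=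
      (hvν.const_mul (F α)).add (huν.const_mul (G α))
    rw [integral_congr_ae e, integral_add i12 i34, integral_add int1' int2',
      integral_add (hvν.const_mul (F α)) (huν.const_mul (G α)),
      integral_const_mul, integral_const_mul]
  have hmain' : (F β - F α) * (G β - G α)
      = (∫ s, (v s * (F s - F α)) ∂ν) + (∫ s, (u s * (G s - G α)) ∂ν) := by
    rw [← hAu, ← hAv, hmain, integral_congr_ae ecg1, integral_congr_ae ecg2]
  rw [hwq, hsum, hAu, hAv, ← hmain']
  ring

/-- The Lagrange identity:
`∫_{[α,β)} (g·τf - f·τg) dϱ = W(f,g)(β) - W(f,g)(α)`. -/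
theorem stmt7 (a b : ℝ) (hab : a < b) (ω : Measure ℝ) (σf χf ρf : ℝ → ℂ)
    (hσ : LocInt a b ω σf) (hχ : LocInt a b ω χf) (hρ : LocInt a b ω ρf)
    (hsupp : SuppFull a b ω σf)
    (hatoms : NoCommonAtoms a b ω σf χf ρf)
    (f f1 fτ g g1 gτ : ℝ → ℂ)
    (hf : InDom a b ω σf χf ρf f f1 fτ)
    (hg : InDom a b ω σf χf ρf g g1 gτ)
    (hint : LocInt a b ω (fun t => (g t * fτ t - f t * gτ t) * ρf t)) :
    ∀ α ∈ Set.Ioo a b, ∀ β ∈ Set.Ioo a b, α < β →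
      ∫ t in Set.Ico α β, (g t * fτ t - f t * gτ t) * ρf t ∂ω =
        (f β * g1 β - f1 β * g β) - (f α * g1 α - f1 α * g α) := by
  intro α hα β hβ hαβ
  have hαβ' : α ≤ β := hαβ.le
  have hIcc : ∀ s ∈ Set.Icc α β, s ∈ Set.Ioo a b := fun s hs =>
    ⟨lt_of_lt_of_le hα.1 hs.1, lt_of_le_of_lt hs.2 hβ.2⟩
  have hIco : ∀ t ∈ Set.Ico α β, t ∈ Set.Ioo a b := fun t ht =>
    hIcc t ⟨ht.1, ht.2.le⟩
  -- pointwise consequences of NoCommonAtoms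
  have hσρ : ∀ t ∈ Set.Ico α β, ((ω {t}).toReal : ℂ) ≠ 0 → σf t * ρf t = 0 := by
    intro t ht hc
    have h1 := (hatoms t (hIco t ht)).1
    have h2 : ((ω {t}).toReal : ℂ) * ((ω {t}).toReal : ℂ) * (σf t * ρf t) = 0 := by
      linear_combination h1
    rcases mul_eq_zero.mp h2 with h | h
    · exact absurd (mul_self_eq_zero.mp h) hc
    · exact h
  have hσχ : ∀ t ∈ Set.Ico α β, ((ω {t}).toReal : ℂ) ≠ 0 → σf t * χf t = 0 := by
    intro t ht hc
    have h1 := (hatoms t (hIco t ht)).2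
    have h2 : ((ω {t}).toReal : ℂ) * ((ω {t}).toReal : ℂ) * (σf t * χf t) = 0 := by
      linear_combination h1
    rcases mul_eq_zero.mp h2 with h | h
    · exact absurd (mul_self_eq_zero.mp h) hc
    · exact h
  have diag1 : ∀ t ∈ Set.Ico α β,
      (f1 t * σf t) * (g t * χf t - gτ t * ρf t) * ((ω {t}).toReal : ℂ) = 0 := by
    intro t ht
    by_cases hc : ((ω {t}).toReal : ℂ) = 0
    · rw [hc, mul_zero]
    · have e1 := hσρ t ht hc
      have e2 := hσχ t ht hc
      linear_combination (f1 t * g t * ((ω {t}).toReal : ℂ)) * e2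
        - (f1 t * gτ t * ((ω {t}).toReal : ℂ)) * e1
  have diag2 : ∀ t ∈ Set.Ico α β,
      (g1 t * σf t) * (f t * χf t - fτ t * ρf t) * ((ω {t}).toReal : ℂ) = 0 := by
    intro t ht
    by_cases hc : ((ω {t}).toReal : ℂ) = 0
    · rw [hc, mul_zero]
    · have e1 := hσρ t ht hc
      have e2 := hσχ t ht hc
      linear_combination (g1 t * f t * ((ω {t}).toReal : ℂ)) * e2
        - (g1 t * fτ t * ((ω {t}).toReal : ℂ)) * e1
  obtain ⟨intA, eqA⟩ := lagrange_key α β hαβ' ω (fun t => f1 t * σf t)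
    (fun t => g t * χf t - gτ t * ρf t) f g1
    (hf.1 α hα β hβ) (hg.2.1 α hα β hβ)
    (fun s hs => (hf.2.2 α hα s (hIcc s hs) hs.1).1)
    (fun s hs => (hg.2.2 α hα s (hIcc s hs) hs.1).2)
    diag1
  obtain ⟨intB, eqB⟩ := lagrange_key α β hαβ' ω (fun t => g1 t * σf t)
    (fun t => f t * χf t - fτ t * ρf t) g f1
    (hg.1 α hα β hβ) (hf.2.1 α hα β hβ)
    (fun s hs => (hg.2.2 α hα s (hIcc s hs) hs.1).1)
    (fun s hs => (hf.2.2 α hα s (hIcc s hs) hs.1).2)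
    diag2
  have hcomb : ∫ t in Set.Ico α β, (g t * fτ t - f t * gτ t) * ρf t ∂ω
      = (∫ t in Set.Ico α β,
          ((g t * χf t - gτ t * ρf t) * f t + f1 t * σf t * g1 t) ∂ω)
        - ∫ t in Set.Ico α β,
          ((f t * χf t - fτ t * ρf t) * g t + g1 t * σf t * f1 t) ∂ω := by
    rw [← integral_sub intA intB]
    exact integral_congr_ae (Filter.Eventually.of_forall fun t => by ring)
  rw [hcomb, ← eqA, ← eqB]
  ring
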